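/- Let r and s be odd integers with 3 ≤ s < r, and set n = r + s − 2 (so n is even). Then the element ∑_{q=0}^{(s−3)/2} [q, s−2−q, r]^0 − [0, s−1, r−1]^0 of Θ_n lies in the image of the map d : Θ_n → Θ_n; consequently ∑_{q=0}^{(s−3)/2} [q, s−2−q, r]^0 and [0, s−1, r−1]^0 represent the same class in the quotient Θ_n / d(Θ_n). -/

import Mathlib

/-- Validity condition for a theta-graph basis symbol `[a,b,c]^l`:
`0 ≤ a < b < c`, `l ∈ {0,1,2}`, with the parity conventions that `l = 0`
requires `a + b + c` even and `l = 2` requires `a + b + c` odd. -/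
def validSym (a b c l : ℤ) : Prop :=
  0 ≤ a ∧ a < b ∧ b < c ∧ (l = 0 ∨ l = 1 ∨ l = 2) ∧
    (l = 0 → Even (a + b + c)) ∧ (l = 2 → Odd (a + b + c))

/-- The indexing set of valid theta symbols. -/
def SymIdx : Type := {p : ℤ × ℤ × ℤ × ℤ // validSym p.1 p.2.1 p.2.2.1 p.2.2.2}

/-- The theta space `Θ`: the free `ℚ`-vector space on the valid symbols. -/
abbrev Theta : Type := SymIdx →₀ ℚ

/-- The symbol `[a,b,c]^l ∈ Θ`, extended by `0` when the validity
conditions fail. -/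
noncomputable def sym (a b c l : ℤ) : Theta := by
  classical
  exact if h : validSym a b c l then Finsupp.single ⟨(a, b, c, l), h⟩ 1 else 0

/-- Value of the differential on a basis symbol. -/
noncomputable def dAux (p : SymIdx) : Theta := by
  classical
  exact
    if p.1.2.2.2 = 1 then
      sym (p.1.1 + 1) p.1.2.1 p.1.2.2.1 0 - sym p.1.1 (p.1.2.1 + 1) p.1.2.2.1 0
        + sym p.1.1 p.1.2.1 (p.1.2.2.1 + 1) 0
    else if p.1.2.2.2 = 2 then
      (2 : ℚ) • (sym (p.1.1 + 1) p.1.2.1 p.1.2.2.1 1 - sym p.1.1 (p.1.2.1 + 1) p.1.2.2.1 1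
        + sym p.1.1 p.1.2.1 (p.1.2.2.1 + 1) 1)
    else 0

/-- The `ℚ`-linear differential `d : Θ → Θ`, given on basis symbols by
`d [a,b,c]^0 = 0`, `d [a,b,c]^1 = [a+1,b,c]^0 - [a,b+1,c]^0 + [a,b,c+1]^0`,
`d [a,b,c]^2 = 2([a+1,b,c]^1 - [a,b+1,c]^1 + [a,b,c+1]^1)`. -/
noncomputable def dTheta : Theta →ₗ[ℚ] Theta :=
  Finsupp.lsum ℚ fun p => LinearMap.toSpanSingleton ℚ Theta (dAux p)

/-- The weight-`n` part `Θ_n`: the span of the symbols `[a,b,c]^l` with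
`a + b + c + l = n`. -/
noncomputable def ThetaN (n : ℤ) : Submodule ℚ Theta :=
  Submodule.span ℚ {x | ∃ a b c l : ℤ, a + b + c + l = n ∧ x = sym a b c l}
lemma sym_invalid' {a b c l : ℤ} (h : ¬ validSym a b c l) : sym a b c l = 0 := dif_neg h

lemma dTheta_sym1' (a b c : ℤ) (h : validSym a b c 1) :
    dTheta (sym a b c 1) = sym (a+1) b c 0 - sym a (b+1) c 0 + sym a b (c+1) 0 := by
  rw [sym, dif_pos h]
  erw [dTheta, Finsupp.lsum_single]
  simp [dAux]

lemma sym_mem' (n a b c l : ℤ) (h : a + b + c + l = n) : sym a b c l ∈ ThetaN n :=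
  Submodule.subset_span ⟨a, b, c, l, h, rfl⟩


/-- For odd `r > s ≥ 3` and `n = r + s - 2`, the element
`∑_{q=0}^{(s-3)/2} [q, s-2-q, r]^0 - [0, s-1, r-1]^0` of `Θ_n` lies in the
image of `d : Θ_n → Θ_n`; consequently the two terms represent the same class
in `Θ_n / d(Θ_n)`. -/
theorem same_class (r s : ℤ) (hr : Odd r) (hs : Odd s) (h3 : 3 ≤ s) (hsr : s < r) :
    ((∑ q ∈ Finset.range (((s - 3) / 2).toNat + 1),
        sym (q : ℤ) (s - 2 - (q : ℤ)) r 0) - sym 0 (s - 1) (r - 1) 0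
      ∈ Submodule.map dTheta (ThetaN (r + s - 2))) ∧
    ∀ (h1 : (∑ q ∈ Finset.range (((s - 3) / 2).toNat + 1),
              sym (q : ℤ) (s - 2 - (q : ℤ)) r 0) ∈ ThetaN (r + s - 2))
      (h2 : sym 0 (s - 1) (r - 1) 0 ∈ ThetaN (r + s - 2)),
      (Submodule.Quotient.mk
          ⟨∑ q ∈ Finset.range (((s - 3) / 2).toNat + 1),
              sym (q : ℤ) (s - 2 - (q : ℤ)) r 0, h1⟩ :
        ↥(ThetaN (r + s - 2)) ⧸
          (Submodule.map dTheta (ThetaN (r + s - 2))).comap (ThetaN (r + s - 2)).subtype)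
        = Submodule.Quotient.mk ⟨sym 0 (s - 1) (r - 1) 0, h2⟩ := by
  obtain ⟨k, hk⟩ := hs
  obtain ⟨m, hm⟩ := hr
  set N := ((s - 3) / 2).toNat with hN
  set g : ℕ → Theta := fun q => sym (q : ℤ) (s - 1 - (q : ℤ)) (r - 1) 0 with hg
  set x : Theta := ∑ q ∈ Finset.range (N + 1), sym (q : ℤ) (s - 2 - (q : ℤ)) (r - 1) 1 with hx
  have hxmem : x ∈ ThetaN (r + s - 2) :=
    Submodule.sum_mem _ fun q hq => sym_mem' _ _ _ _ _ (by ring)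
  have hdx : dTheta x =
      (∑ q ∈ Finset.range (N + 1), sym (q : ℤ) (s - 2 - (q : ℤ)) r 0)
        - sym 0 (s - 1) (r - 1) 0 := by
    have hstep : ∀ q ∈ Finset.range (N + 1),
        dTheta (sym (q : ℤ) (s - 2 - (q : ℤ)) (r - 1) 1)
          = (g (q + 1) - g q) + sym (q : ℤ) (s - 2 - (q : ℤ)) r 0 := by
      intro q hq
      simp only [Finset.mem_range] at hq
      rw [dTheta_sym1' _ _ _ ⟨by positivity, by omega, by omega, by omega, by omega, by omega⟩]
      simp only [hg]
      push_cast
      ring_nf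
    rw [hx, map_sum, Finset.sum_congr rfl hstep, Finset.sum_add_distrib,
      Finset.sum_range_sub g (N + 1)]
    have hzero : g (N + 1) = 0 := by
      apply sym_invalid'
      rintro ⟨-, hab, -⟩
      push_cast at hab
      omega
    have hg0 : g 0 = sym 0 (s - 1) (r - 1) 0 := by simp [hg]
    rw [hzero, hg0]
    abel
  have hmain : (∑ q ∈ Finset.range (N + 1), sym (q : ℤ) (s - 2 - (q : ℤ)) r 0)
      - sym 0 (s - 1) (r - 1) 0 ∈ Submodule.map dTheta (ThetaN (r + s - 2)) :=
    ⟨x, hxmem, hdx⟩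
  refine ⟨hmain, fun h1 h2 => ?_⟩
  rw [Submodule.Quotient.eq, Submodule.mem_comap]
  exact hmain
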